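/- Let Z be a separable real Banach space, let φ : ℓ₁ → Z be a bounded linear surjection, and let i : ker φ → ℓ₁ be the inclusion. If every nonnegative continuous quadratic form q : ker φ → ℝ extends to a nonnegative continuous quadratic form Q : ℓ₁ → ℝ (i.e. Q ∘ i = q), then every short exact sequence 0 → ℓ₂ → Y → Z → 0 of real Banach spaces splits. -/

import Mathlib

noncomputable section

open scoped InnerProductSpace

/-- The real sequence space `ℓ₁(ℕ)`. -/
abbrev ellOne : Type := lp (fun _ : ℕ => ℝ) 1

/-- The real sequence space `ℓ₂(ℕ)`. -/
abbrev ellTwo : Type := lp (fun _ : ℕ => ℝ) 2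


lemma ellOne_norm_summable (x : ellOne) : Summable fun n => ‖x n‖ := by
  have := (lp.memℓp x).summable (p := 1) (by norm_num)
  simpa using this

lemma ellOne_norm_eq (x : ellOne) : ‖x‖ = ∑' n, ‖x n‖ := by
  have := lp.norm_eq_tsum_rpow (p := 1) (by norm_num) x
  simpa using this

lemma ellOne_single_eq (x : ellOne) (n : ℕ) :
    lp.single 1 n (x n) = x n • (lp.single 1 n (1 : ℝ) : ellOne) := by
  rw [← lp.single_smul, smul_eq_mul, mul_one]

lemma exists_lift {Z Y : Type*} [NormedAddCommGroup Z] [NormedSpace ℝ Z] [CompleteSpace Z]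
    [NormedAddCommGroup Y] [NormedSpace ℝ Y] [CompleteSpace Y]
    (φ : ellOne →L[ℝ] Z) (ρ : Y →L[ℝ] Z) (hρ : Function.Surjective ρ) :
    ∃ T : ellOne →L[ℝ] Y, ∀ x, ρ (T x) = φ x := by
  obtain ⟨C, hCpos, hC⟩ := ρ.exists_preimage_norm_le hρ
  choose y hy hy' using hC
  set e : ℕ → ellOne := fun n => lp.single 1 n (1 : ℝ) with he
  set M : ℝ := C * ‖φ‖ with hM
  have hMy : ∀ n, ‖y (φ (e n))‖ ≤ M := by
    intro n
    refine (hy' _).trans ?_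
    have h1 : ‖e n‖ = 1 := by
      have := lp.norm_single (p := 1) (E := fun _ : ℕ => ℝ) (by norm_num) n (1:ℝ)
      simpa [he] using this
    have := φ.le_opNorm (e n)
    rw [h1, mul_one] at this
    exact by nlinarith [norm_nonneg (φ (e n))]
  have hM0 : 0 ≤ M := le_trans (norm_nonneg _) (hMy 0)
  have hsumn : ∀ x : ellOne, Summable fun n => ‖x n • y (φ (e n))‖ := by
    intro x
    refine Summable.of_nonneg_of_le (fun n => norm_nonneg _) (fun n => ?_)
      ((ellOne_norm_summable x).mul_right M)
    rw [norm_smul]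
    exact mul_le_mul_of_nonneg_left (hMy n) (norm_nonneg _)
  have hsum : ∀ x : ellOne, Summable fun n => x n • y (φ (e n)) :=
    fun x => .of_norm (hsumn x)
  set F : ellOne →ₗ[ℝ] Y :=
    { toFun := fun x => ∑' n, x n • y (φ (e n))
      map_add' := by
        intro a b
        simp only
        rw [← Summable.tsum_add (hsum a) (hsum b)]
        congr 1
        funext n
        rw [lp.coeFn_add]
        simp [add_smul]
      map_smul' := by
        intro c a
        simp only [RingHom.id_apply]
        rw [← Summable.tsum_const_smul c (hsum a)]
        congr 1
        funext n
        rw [lp.coeFn_smul]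
        simp [smul_smul] } with hF
  have hFb : ∀ x : ellOne, ‖F x‖ ≤ M * ‖x‖ := by
    intro x
    refine (norm_tsum_le_tsum_norm (hsumn x)).trans ?_
    rw [ellOne_norm_eq, ← (ellOne_norm_summable x).tsum_mul_left M]
    refine Summable.tsum_le_tsum (fun n => ?_) (hsumn x) ((ellOne_norm_summable x).mul_left M)
    rw [norm_smul, mul_comm (M : ℝ)]
    exact mul_le_mul_of_nonneg_left (hMy n) (norm_nonneg _)
  refine ⟨F.mkContinuous M hFb, fun x => ?_⟩
  have h1 : HasSum (fun n : ℕ => lp.single 1 n (x n)) x := lp.hasSum_single (by norm_num) x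
  have h2 : HasSum (fun n : ℕ => x n • y (φ (e n))) (F x) := (hsum x).hasSum
  have h3 := h2.mapL ρ
  have h4 := h1.mapL φ
  have heq : (fun n : ℕ => ρ (x n • y (φ (e n)))) = fun n : ℕ => φ (lp.single 1 n (x n)) := by
    funext n
    rw [ellOne_single_eq x n, map_smul, map_smul, hy]
  rw [heq] at h3
  exact h3.unique h4


/-- Cauchy–Schwarz for a nonnegative symmetric continuous bilinear form. -/
lemma bilin_cauchy_schwarz {X : Type*} [NormedAddCommGroup X] [NormedSpace ℝ X]
    (B : X →L[ℝ] X →L[ℝ] ℝ) (hsymm : ∀ x y, B x y = B y x) (h0 : ∀ x, 0 ≤ B x x)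
    (x w : X) : |B x w| ≤ Real.sqrt (B x x) * Real.sqrt (B w w) := by
  have key : ∀ t : ℝ, 0 ≤ B w w * (t * t) + 2 * B x w * t + B x x := by
    intro t
    have h := h0 (x + t • w)
    have hexp : B (x + t • w) (x + t • w)
        = B w w * (t * t) + 2 * B x w * t + B x x := by
      simp only [map_add, map_smul, ContinuousLinearMap.add_apply,
        ContinuousLinearMap.smul_apply, smul_eq_mul]
      rw [hsymm ↑w ↑x]
      ring
    linarith [hexp ▸ h]
  have hd := discrim_le_zero key
  rw [discrim] at hd
  have hsq : (B x w) ^ 2 ≤ B x x * B w w := by nlinarith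
  calc |B x w| = Real.sqrt ((B x w) ^ 2) := (Real.sqrt_sq_eq_abs _).symm
    _ ≤ Real.sqrt (B x x * B w w) := Real.sqrt_le_sqrt hsq
    _ = Real.sqrt (B x x) * Real.sqrt (B w w) := Real.sqrt_mul (h0 x) _

set_option maxHeartbeats 1000000 in
/-- Extension of a Hilbert-space valued operator from a subspace, given an extension of the
associated quadratic form. -/
lemma operator_extension {X H : Type*} [NormedAddCommGroup X] [NormedSpace ℝ X]
    [NormedAddCommGroup H] [InnerProductSpace ℝ H] [CompleteSpace H]
    (D : Submodule ℝ X) (σ : D →L[ℝ] H) (Q : X → ℝ) (B : X →L[ℝ] X →L[ℝ] ℝ)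
    (hsymm : ∀ x y, B x y = B y x) (hdiag : ∀ x, Q x = B x x) (hQ0 : ∀ x, 0 ≤ Q x)
    (hQD : ∀ w : D, Q ↑w = ‖σ w‖ ^ 2) :
    ∃ τ : X →L[ℝ] H, ∀ w : D, τ ↑w = σ w := by
  have hCS : ∀ x w : X, |B x w| ≤ Real.sqrt (Q x) * Real.sqrt (Q w) := by
    intro x w
    have := bilin_cauchy_schwarz B hsymm (fun z => (hdiag z) ▸ hQ0 z) x w
    rwa [← hdiag x, ← hdiag w] at this
  have hsqQ : ∀ w : D, Real.sqrt (Q ↑w) = ‖σ w‖ := by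
    intro w
    rw [hQD w, Real.sqrt_sq (norm_nonneg _)]
  -- polarization identity on D
  have hpol : ∀ v w : D, B ↑v ↑w = ⟪σ v, σ w⟫_ℝ := by
    intro v w
    have h1 : B (↑v + ↑w) (↑v + ↑w) = Q (↑(v + w) : X) := by
      rw [hdiag]; norm_cast
    have h2 : B (↑v + ↑w) (↑v + ↑w) = B ↑v ↑v + 2 * B ↑v ↑w + B ↑w ↑w := by
      simp only [map_add, ContinuousLinearMap.add_apply]
      rw [hsymm ↑w ↑v]; ring
    have h3 : Q (↑(v + w) : X) = ‖σ v + σ w‖ ^ 2 := by rw [hQD (v + w), map_add]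
    have h4 : ‖σ v + σ w‖ ^ 2 = ‖σ v‖ ^ 2 + 2 * ⟪σ v, σ w⟫_ℝ + ‖σ w‖ ^ 2 :=
      norm_add_sq_real _ _
    have h5 : B ↑v ↑v = ‖σ v‖ ^ 2 := by rw [← hdiag, hQD]
    have h6 : B ↑w ↑w = ‖σ w‖ ^ 2 := by rw [← hdiag, hQD]
    nlinarith [h1, h2, h3, h4, h5, h6]
  classical
  set σl : D →ₗ[ℝ] H := (σ : D →ₗ[ℝ] H) with hσl
  set K : Submodule ℝ H := (LinearMap.range σl).topologicalClosure with hK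
  haveI : CompleteSpace K := (Submodule.isClosed_topologicalClosure _).completeSpace_coe
  have hmemK : ∀ w : D, σ w ∈ K :=
    fun w => Submodule.le_topologicalClosure _ (LinearMap.mem_range_self σl w)
  -- uniqueness of representers
  have huniq : ∀ (x : X) (u u' : H), u ∈ K → u' ∈ K →
      (∀ w : D, ⟪u, σ w⟫_ℝ = B x ↑w) → (∀ w : D, ⟪u', σ w⟫_ℝ = B x ↑w) → u = u' := by
    intro x u u' hu hu' hiu hiu'
    have hd : u - u' ∈ K := Submodule.sub_mem _ hu hu'
    have hker : K ≤ LinearMap.ker ((innerSL ℝ (u - u')) : H →ₗ[ℝ] ℝ) := by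
      refine Submodule.topologicalClosure_minimal _ ?_ (ContinuousLinearMap.isClosed_ker _)
      rintro - ⟨w, rfl⟩
      simp only [LinearMap.mem_ker, coe_innerSL_apply]
      show ⟪u - u', σ w⟫_ℝ = 0
      rw [inner_sub_left, hiu w, hiu' w, sub_self]
    have h0 : ⟪u - u', u - u'⟫_ℝ = 0 := by
      have h := hker hd
      rw [LinearMap.mem_ker] at h
      exact h
    exact sub_eq_zero.1 (inner_self_eq_zero.1 h0)
  -- existence of representers
  have hex : ∀ x : X, ∃ u : H, u ∈ K ∧ ‖u‖ ≤ Real.sqrt (Q x) ∧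
      ∀ w : D, ⟪u, σ w⟫_ℝ = B x ↑w := by
    intro x
    -- functional on range σl
    have hkerle : LinearMap.ker σl ≤ LinearMap.ker (((B x).comp D.subtypeL) : D →ₗ[ℝ] ℝ) := by
      intro w hw
      rw [LinearMap.mem_ker] at hw ⊢
      show B x ↑w = 0
      have hQw : Real.sqrt (Q ↑w) = 0 := by
        rw [hsqQ w]
        show ‖σ w‖ = 0
        rw [show σ w = σl w from rfl, hw, norm_zero]
      have := hCS x ↑w
      rw [hQw, mul_zero] at this
      exact abs_eq_zero.1 (le_antisymm this (abs_nonneg _))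
    set g0 : LinearMap.range σl →ₗ[ℝ] ℝ :=
      ((LinearMap.ker σl).liftQ (((B x).comp D.subtypeL) : D →ₗ[ℝ] ℝ) hkerle).comp
        σl.quotKerEquivRange.symm.toLinearMap with hg0
    have hg0app : ∀ w : D, g0 ⟨σ w, LinearMap.mem_range_self σl w⟩ = B x ↑w := by
      intro w
      have h1 : σl.quotKerEquivRange (Submodule.Quotient.mk w)
          = ⟨σ w, LinearMap.mem_range_self σl w⟩ :=
        Subtype.ext (σl.quotKerEquivRange_apply_mk w)
      have h2 : σl.quotKerEquivRange.symm.toLinearMap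
          ⟨σ w, LinearMap.mem_range_self σl w⟩ = Submodule.Quotient.mk w := by
        rw [← h1]; exact σl.quotKerEquivRange.symm_apply_apply _
      rw [hg0, LinearMap.comp_apply, h2, Submodule.liftQ_apply]
      rfl
    have hg0b : ∀ u : LinearMap.range σl, ‖g0 u‖ ≤ Real.sqrt (Q x) * ‖u‖ := by
      rintro ⟨-, w, rfl⟩
      rw [show ((⟨σl w, LinearMap.mem_range_self σl w⟩ : LinearMap.range σl))
        = ⟨σ w, LinearMap.mem_range_self σl w⟩ from rfl, hg0app w]
      have : ‖(⟨σ w, LinearMap.mem_range_self σl w⟩ : LinearMap.range σl)‖ = ‖σ w‖ := rfl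
      rw [this, Real.norm_eq_abs, ← hsqQ w]
      exact hCS x ↑w
    set g1 : LinearMap.range σl →L[ℝ] ℝ := g0.mkContinuous (Real.sqrt (Q x)) hg0b with hg1
    obtain ⟨g, hgext, hgnorm⟩ := exists_extension_norm_eq (LinearMap.range σl) g1
    set h : H := (InnerProductSpace.toDual ℝ H).symm g with hh
    refine ⟨(Submodule.orthogonalProjection K h : H), (Submodule.orthogonalProjection K h).2, ?_, ?_⟩
    · have h1 : ‖(Submodule.orthogonalProjection K h : H)‖ ≤ ‖h‖ := by
        have := (Submodule.orthogonalProjection K).le_opNorm h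
        have h2 := Submodule.orthogonalProjection_norm_le K
        calc ‖(Submodule.orthogonalProjection K h : H)‖ = ‖Submodule.orthogonalProjection K h‖ := rfl
          _ ≤ ‖Submodule.orthogonalProjection K‖ * ‖h‖ := this
          _ ≤ 1 * ‖h‖ := by
              exact mul_le_mul_of_nonneg_right h2 (norm_nonneg _)
          _ = ‖h‖ := one_mul _
      have h2 : ‖h‖ = ‖g‖ := by
        rw [hh]
        exact LinearIsometryEquiv.norm_map _ _
      have h3 : ‖g‖ ≤ Real.sqrt (Q x) :=
        hgnorm ▸ g0.mkContinuous_norm_le (Real.sqrt_nonneg _) hg0b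
      linarith
    · intro w
      have horth := Submodule.starProjection_inner_eq_zero h (σ w) (hmemK w)
      have h1 : ⟪(Submodule.orthogonalProjection K h : H), σ w⟫_ℝ = ⟪h, σ w⟫_ℝ := by
        have : ⟪h - (Submodule.orthogonalProjection K h : H), σ w⟫_ℝ = 0 := horth
        rw [inner_sub_left] at this
        linarith
      rw [h1, hh]
      have h2 : ⟪(InnerProductSpace.toDual ℝ H).symm g, σ w⟫_ℝ = g (σ w) :=
        InnerProductSpace.toDual_symm_apply
      rw [h2]
      have h3 : g (σ w) = g1 ⟨σ w, LinearMap.mem_range_self σl w⟩ :=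
        hgext ⟨σ w, LinearMap.mem_range_self σl w⟩
      rw [h3]
      exact hg0app w
  choose t htK htb hti using hex
  set τl : X →ₗ[ℝ] H :=
    { toFun := t
      map_add' := by
        intro a b
        refine huniq (a + b) _ _ (htK _) (Submodule.add_mem _ (htK a) (htK b)) (hti _) ?_
        intro w
        rw [inner_add_left, hti a w, hti b w, map_add, ContinuousLinearMap.add_apply]
      map_smul' := by
        intro c a
        simp only [RingHom.id_apply]
        refine huniq (c • a) _ _ (htK _) (Submodule.smul_mem _ c (htK a)) (hti _) ?_
        intro w
        rw [real_inner_smul_left, hti a w, map_smul, ContinuousLinearMap.smul_apply,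
          smul_eq_mul] } with hτl
  have hτb : ∀ x : X, ‖τl x‖ ≤ Real.sqrt ‖B‖ * ‖x‖ := by
    intro x
    refine (htb x).trans ?_
    have h1 : Q x ≤ ‖B‖ * (‖x‖ * ‖x‖) := by
      rw [hdiag]
      have k1 : B x x ≤ ‖B x x‖ := le_trans (le_abs_self _) (le_of_eq (Real.norm_eq_abs _).symm)
      have k2 : ‖B x x‖ ≤ ‖B x‖ * ‖x‖ := (B x).le_opNorm x
      have k3 : ‖B x‖ ≤ ‖B‖ * ‖x‖ := B.le_opNorm x
      nlinarith [norm_nonneg x, norm_nonneg (B x)]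
    calc Real.sqrt (Q x) ≤ Real.sqrt (‖B‖ * (‖x‖ * ‖x‖)) := Real.sqrt_le_sqrt h1
      _ = Real.sqrt ‖B‖ * Real.sqrt (‖x‖ * ‖x‖) := Real.sqrt_mul (norm_nonneg B) _
      _ = Real.sqrt ‖B‖ * ‖x‖ := by rw [Real.sqrt_mul_self (norm_nonneg _)]
  refine ⟨τl.mkContinuous (Real.sqrt ‖B‖) hτb, fun w => ?_⟩
  rw [LinearMap.mkContinuous_apply, hτl]
  show t ↑w = σ w
  exact huniq ↑w (t ↑w) (σ w) (htK ↑w) (hmemK w) (hti ↑w)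
    (fun w' => (hpol w w').symm)


lemma exists_inverse_on_range {E Y : Type*} [NormedAddCommGroup E] [NormedSpace ℝ E]
    [CompleteSpace E] [NormedAddCommGroup Y] [NormedSpace ℝ Y] [CompleteSpace Y]
    (j : E →L[ℝ] Y) (hinj : Function.Injective j) (S : Submodule ℝ Y)
    (hcl : IsClosed (S : Set Y)) (hs : (S : Set Y) = Set.range j) :
    ∃ ψ : S →L[ℝ] E, ∀ s : S, j (ψ s) = ↑s := by
  haveI : CompleteSpace S := hcl.completeSpace_coe
  have hmem : ∀ v : E, j v ∈ S := by
    intro v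
    show j v ∈ (S : Set Y)
    rw [hs]
    exact Set.mem_range_self v
  set jc : E →L[ℝ] S := j.codRestrict S hmem with hjc
  have hker : LinearMap.ker (jc : E →ₗ[ℝ] S) = ⊥ := by
    rw [LinearMap.ker_eq_bot]
    intro a b hab
    exact hinj (congrArg Subtype.val hab)
  have hrange : LinearMap.range (jc : E →ₗ[ℝ] S) = ⊤ := by
    rw [LinearMap.range_eq_top]
    rintro ⟨y, hy⟩
    have : y ∈ Set.range j := by rw [← hs]; exact hy
    obtain ⟨v, hv⟩ := this
    exact ⟨v, Subtype.ext hv⟩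
  set e := ContinuousLinearEquiv.ofBijective jc hker hrange with he
  refine ⟨(e.symm : S →L[ℝ] E), fun s => ?_⟩
  have h1 : jc (e.symm s) = s := e.apply_symm_apply s
  exact congrArg Subtype.val h1

/-- A continuous quadratic form on a real Banach space: `q x = b x x` for some
continuous bilinear form `b`. -/
def IsContQuadraticForm {X : Type*} [NormedAddCommGroup X] [NormedSpace ℝ X]
    (q : X → ℝ) : Prop :=
  ∃ b : X →L[ℝ] X →L[ℝ] ℝ, ∀ x, q x = b x x

/-- A bounded operator `T : X → Y` is 1-summing (absolutely summing). -/
def OneSumming {X Y : Type*} [NormedAddCommGroup X] [NormedSpace ℝ X]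
    [NormedAddCommGroup Y] [NormedSpace ℝ Y] (T : X →L[ℝ] Y) : Prop :=
  ∃ C : ℝ, 0 ≤ C ∧ ∀ (n : ℕ) (x : Fin n → X),
    ∑ k, ‖T (x k)‖ ≤ C * ⨆ ξ : {ξ : X →L[ℝ] ℝ // ‖ξ‖ ≤ 1}, ∑ k, |ξ.1 (x k)|

/-- If every nonnegative continuous quadratic form on `ker φ` extends to a nonnegative
continuous quadratic form on `ℓ₁`, then every short exact sequence
`0 → ℓ₂ → Y → Z → 0` splits. -/
theorem quadratic_extension_implies_splitting (Z : Type*) [NormedAddCommGroup Z]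
    [NormedSpace ℝ Z] [CompleteSpace Z] [TopologicalSpace.SeparableSpace Z]
    (φ : ellOne →L[ℝ] Z) (hφ : Function.Surjective φ)
    (hext : ∀ q : (LinearMap.ker (φ : ellOne →ₗ[ℝ] Z)) → ℝ, IsContQuadraticForm q → (∀ x, 0 ≤ q x) →
      ∃ Q : ellOne → ℝ, IsContQuadraticForm Q ∧ (∀ x, 0 ≤ Q x) ∧
        ∀ x : LinearMap.ker (φ : ellOne →ₗ[ℝ] Z), Q (x : ellOne) = q x) :
    ∀ (Y : Type) (_ : NormedAddCommGroup Y) (_ : NormedSpace ℝ Y)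
      (_ : CompleteSpace Y) (j : ellTwo →L[ℝ] Y) (ρ : Y →L[ℝ] Z),
      Function.Injective j → IsClosed (Set.range j) → Function.Surjective ρ →
      (LinearMap.ker (ρ : Y →ₗ[ℝ] Z) : Set Y) = Set.range j →
      ∃ R : Y →L[ℝ] ellTwo, ∀ v : ellTwo, R (j v) = v := by
  intro Y _ _ _ j ρ hjinj hjcl hρsurj hker
  obtain ⟨T, hT⟩ := exists_lift φ ρ hρsurj
  set S : Submodule ℝ Y := LinearMap.ker (ρ : Y →ₗ[ℝ] Z) with hS
  have hScl : IsClosed (S : Set Y) := ContinuousLinearMap.isClosed_ker ρ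
  obtain ⟨ψ, hψ⟩ := exists_inverse_on_range j hjinj S hScl hker
  have hρj : ∀ v : ellTwo, ρ (j v) = 0 := by
    intro v
    have h1 : j v ∈ (S : Set Y) := by rw [hker]; exact Set.mem_range_self v
    exact h1
  set Tk : (LinearMap.ker (φ : ellOne →ₗ[ℝ] Z)) →L[ℝ] S :=
    (T.comp (LinearMap.ker (φ : ellOne →ₗ[ℝ] Z)).subtypeL).codRestrict S (fun w => by
      show ρ (T ↑w) = 0
      rw [hT]
      exact w.2) with hTk
  set σ : (LinearMap.ker (φ : ellOne →ₗ[ℝ] Z)) →L[ℝ] ellTwo := ψ.comp Tk with hσ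
  have hjσ : ∀ w : LinearMap.ker (φ : ellOne →ₗ[ℝ] Z), j (σ w) = T ↑w := by
    intro w
    rw [hσ, ContinuousLinearMap.comp_apply, hψ (Tk w)]
    rfl
  -- the quadratic form on ker φ
  obtain ⟨Q, ⟨b, hb⟩, hQ0, hQext⟩ := hext (fun v => ‖σ v‖ ^ 2)
    ⟨(innerSL ℝ).bilinearComp σ σ, fun v => by
      rw [ContinuousLinearMap.bilinearComp_apply, innerSL_apply_apply, real_inner_self_eq_norm_sq]⟩
    (fun v => pow_two_nonneg _)
  set B : ellOne →L[ℝ] ellOne →L[ℝ] ℝ := (2⁻¹ : ℝ) • (b + b.flip) with hB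
  have hBapp : ∀ x y, B x y = 2⁻¹ * (b x y + b y x) := by
    intro x y
    rw [hB]
    simp only [ContinuousLinearMap.smul_apply, ContinuousLinearMap.add_apply,
      ContinuousLinearMap.flip_apply, smul_eq_mul]
    try ring
  have hBsymm : ∀ x y, B x y = B y x := by
    intro x y
    rw [hBapp, hBapp]
    ring
  have hBdiag : ∀ x, Q x = B x x := by
    intro x
    rw [hBapp, hb]
    ring
  obtain ⟨τ, hτ⟩ := operator_extension (LinearMap.ker (φ : ellOne →ₗ[ℝ] Z)) σ Q B hBsymm hBdiag hQ0 (fun w => hQext w)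
  set U : ellOne →L[ℝ] Y := T - j.comp τ with hU
  have hU0 : ∀ w : LinearMap.ker (φ : ellOne →ₗ[ℝ] Z), U ↑w = 0 := by
    intro w
    rw [hU, ContinuousLinearMap.sub_apply, ContinuousLinearMap.comp_apply, hτ w, hjσ w, sub_self]
  have hρU : ∀ x, ρ (U x) = φ x := by
    intro x
    rw [hU, ContinuousLinearMap.sub_apply, map_sub, hT, ContinuousLinearMap.comp_apply,
      hρj, sub_zero]
  -- construct V : Z →L Y with V ∘ φ = U and ρ ∘ V = id
  obtain ⟨Cφ, hCφpos, hCφ⟩ := φ.exists_preimage_norm_le hφ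
  choose χ hχ hχn using hCφ
  have key : ∀ (z : Z) (x : ellOne), φ x = z → U x = U (χ z) := by
    intro z x hx
    have hmem : x - χ z ∈ LinearMap.ker (φ : ellOne →ₗ[ℝ] Z) := by
      rw [LinearMap.mem_ker, ContinuousLinearMap.coe_coe, map_sub, hx, hχ, sub_self]
    have h1 := hU0 ⟨x - χ z, hmem⟩
    have h2 : U x - U (χ z) = 0 := by rw [← map_sub]; exact h1
    exact sub_eq_zero.1 h2
  set Vl : Z →ₗ[ℝ] Y :=
    { toFun := fun z => U (χ z)
      map_add' := by
        intro z z'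
        rw [← key (z + z') (χ z + χ z') (by rw [map_add, hχ, hχ]), map_add]
      map_smul' := by
        intro c z
        simp only [RingHom.id_apply]
        rw [← key (c • z) (c • χ z) (by rw [map_smul, hχ]), map_smul] } with hVl
  have hVb : ∀ z, ‖Vl z‖ ≤ (‖U‖ * Cφ) * ‖z‖ := by
    intro z
    calc ‖U (χ z)‖ ≤ ‖U‖ * ‖χ z‖ := U.le_opNorm _
      _ ≤ ‖U‖ * (Cφ * ‖z‖) := mul_le_mul_of_nonneg_left (hχn z) (norm_nonneg U)
      _ = (‖U‖ * Cφ) * ‖z‖ := by ring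
  set V : Z →L[ℝ] Y := Vl.mkContinuous (‖U‖ * Cφ) hVb with hV
  have hVapp : ∀ z, V z = U (χ z) := fun z => rfl
  have hρV : ∀ z, ρ (V z) = z := by
    intro z
    rw [hVapp, hρU, hχ]
  -- the retraction
  set W : Y →L[ℝ] Y := ContinuousLinearMap.id ℝ Y - V.comp ρ with hW
  have hWapp : ∀ y', W y' = y' - V (ρ y') := fun y' => rfl
  have hWmem : ∀ y', W y' ∈ S := by
    intro y'
    show ρ (W y') = 0
    rw [hWapp, map_sub, hρV, sub_self]
  refine ⟨ψ.comp (W.codRestrict S hWmem), fun v => ?_⟩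
  apply hjinj
  rw [ContinuousLinearMap.comp_apply, hψ]
  show W (j v) = j v
  rw [hWapp, hρj, map_zero, sub_zero]
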